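/- arXiv:1303.0128 — 5 statements merged into one kernel-verified Lean document; each statement's English description precedes it below -/
import Mathlib

section
/- No local hidden variable theory can satisfy the generalized Hardy conditions: if for each party i there exist response functions f(x_i | u_i, λ) and f(x_i | v_i, λ) (nonnegative, summing to 1 over x_i ∈ {1,...,d_i}) and a probability density ρ(λ) such that joint probabilities factorize, then the three conditions P(∀i: u_i = 1) = q > 0, P(∀i≠r: u_i = 1, v_r ≠ d_r) = 0 for every r, and P(∀i: v_i = d_i) = 0 are jointly inconsistent. -/
open Finset

/-- No local hidden variable theory can satisfy the generalized
Hardy conditions (1): `P(∀ i : u_i = 1) = q > 0`,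
`P(∀ i ≠ r : u_i = 1, v_r ≠ d_r) = 0` for every `r`, and `P(∀ i : v_i = d_i) = 0`.
Settings: `false` = `u_i`, `true` = `v_i`; outcomes of party `i` are `Fin (d i)`,
with outcome "1" being `⟨0, _⟩` and outcome "d_i" being `⟨d i - 1, _⟩`. -/
theorem statement0 (n : ℕ) (hn : 0 < n) (d : Fin n → ℕ) (hd : ∀ i, 1 ≤ d i)
    (Ω : Type) [Fintype Ω] (ρ : Ω → ℝ)
    (f : (i : Fin n) → Bool → Ω → Fin (d i) → ℝ)
    (hρ0 : ∀ ω, 0 ≤ ρ ω) (hρ1 : ∑ ω, ρ ω = 1)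
    (hf0 : ∀ i b ω x, 0 ≤ f i b ω x)
    (hf1 : ∀ i b ω, ∑ x, f i b ω x = 1)
    (q : ℝ) (hq : 0 < q)
    (h1 : ∑ ω, ρ ω * ∏ i, f i false ω ⟨0, hd i⟩ = q)
    (h2 : ∀ (r : Fin n) (v : Fin (d r)), v ≠ ⟨d r - 1, Nat.sub_lt (hd r) Nat.one_pos⟩ →
      ∑ ω, ρ ω * (f r true ω v * ∏ i ∈ univ.erase r, f i false ω ⟨0, hd i⟩) = 0)
    (h3 : ∑ ω, ρ ω * ∏ i, f i true ω ⟨d i - 1, Nat.sub_lt (hd i) Nat.one_pos⟩ = 0) :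
    False := by

  obtain ⟨ω, -, hω⟩ := Finset.exists_ne_zero_of_sum_ne_zero (h1 ▸ hq.ne')
  have hρpos : 0 < ρ ω := lt_of_le_of_ne (hρ0 ω) (fun h => hω (by rw [← h]; ring))
  have hprodne : (∏ i, f i false ω ⟨0, hd i⟩) ≠ 0 := fun h => hω (by rw [h]; ring)
  have hfac : ∀ i : Fin n, 0 < f i false ω ⟨0, hd i⟩ := by
    intro i
    rw [Finset.prod_ne_zero_iff] at hprodne
    exact lt_of_le_of_ne (hf0 _ _ _ _) (Ne.symm (hprodne i (mem_univ i)))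
  have key : ∀ (r : Fin n) (v : Fin (d r)),
      v ≠ ⟨d r - 1, Nat.sub_lt (hd r) Nat.one_pos⟩ → f r true ω v = 0 := by
    intro r v hv
    have h0 := (Finset.sum_eq_zero_iff_of_nonneg ?_).mp (h2 r v hv) ω (mem_univ ω)
    · have hpe : 0 < ∏ i ∈ univ.erase r, f i false ω ⟨0, hd i⟩ :=
        Finset.prod_pos (fun i _ => hfac i)
      have := mul_eq_zero.mp h0
      rcases this with h | h
      · exact absurd h hρpos.ne'
      · rcases mul_eq_zero.mp h with h | h
        · exact h
        · exact absurd h hpe.ne'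
    · intro ω' _
      exact mul_nonneg (hρ0 ω') (mul_nonneg (hf0 _ _ _ _)
        (Finset.prod_nonneg (fun i _ => hf0 _ _ _ _)))
  have htop : ∀ r : Fin n, f r true ω ⟨d r - 1, Nat.sub_lt (hd r) Nat.one_pos⟩ = 1 := by
    intro r
    have := hf1 r true ω
    rwa [Finset.sum_eq_single (⟨d r - 1, Nat.sub_lt (hd r) Nat.one_pos⟩ : Fin (d r))
      (fun v _ hv => key r v hv) (fun h => absurd (mem_univ _) h)] at this
  have h30 := (Finset.sum_eq_zero_iff_of_nonneg (fun ω' _ =>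
    mul_nonneg (hρ0 ω') (Finset.prod_nonneg (fun i _ => hf0 _ _ _ _)))).mp h3 ω (mem_univ ω)
  rw [Finset.prod_congr rfl (fun i _ => htop i), Finset.prod_const_one, mul_one] at h30
  exact hρpos.ne' h30
end

section
/- No local hidden variable theory can satisfy the modified Hardy conditions: the conditions P(∀i: u_i = 1) = q > 0, P(v_r ≠ d_r, u_{r+1} = 1) = 0 for every r (indices cyclic, n+1 ≡ 1), and P(∀i: v_i = d_i) = 0 are jointly inconsistent with any LHV model. -/
open Finset

/-- No local hidden variable theory can satisfy the *modified*
Hardy conditions (2): `P(∀ i : u_i = 1) = q > 0`,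
`P(v_r ≠ d_r, u_{r+1} = 1) = 0` for every `r` (indices cyclic, `n + 1 ≡ 1`),
and `P(∀ i : v_i = d_i) = 0`.
Settings: `false` = `u_i`, `true` = `v_i`; outcomes of party `i` are `Fin (d i)`,
with outcome "1" being `⟨0, _⟩` and outcome "d_i" being `⟨d i - 1, _⟩`.
The two-party marginal `P(v_r ≠ d_r, u_{r+1} = 1)` in an LHV model is
`∑ ω, ρ ω * f r true ω v * f (r+1) false ω 1` for each `v ≠ d_r`. -/
theorem statement1 (n : ℕ) (hn : 0 < n) (d : Fin n → ℕ) (hd : ∀ i, 1 ≤ d i)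
    (Ω : Type) [Fintype Ω] (ρ : Ω → ℝ)
    (f : (i : Fin n) → Bool → Ω → Fin (d i) → ℝ)
    (hρ0 : ∀ ω, 0 ≤ ρ ω) (hρ1 : ∑ ω, ρ ω = 1)
    (hf0 : ∀ i b ω x, 0 ≤ f i b ω x)
    (hf1 : ∀ i b ω, ∑ x, f i b ω x = 1)
    (q : ℝ) (hq : 0 < q)
    (h1 : ∑ ω, ρ ω * ∏ i, f i false ω ⟨0, hd i⟩ = q)
    (h2 : ∀ (r : Fin n) (v : Fin (d r)), v ≠ ⟨d r - 1, Nat.sub_lt (hd r) Nat.one_pos⟩ →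
      ∑ ω, ρ ω * (f r true ω v *
        f ⟨(r.1 + 1) % n, Nat.mod_lt _ hn⟩ false ω ⟨0, hd ⟨(r.1 + 1) % n, Nat.mod_lt _ hn⟩⟩) = 0)
    (h3 : ∑ ω, ρ ω * ∏ i, f i true ω ⟨d i - 1, Nat.sub_lt (hd i) Nat.one_pos⟩ = 0) :
    False := by
  -- find ω with positive weight for the all-u outcome
  obtain ⟨ω, hω⟩ : ∃ ω, 0 < ρ ω * ∏ i, f i false ω ⟨0, hd i⟩ := by
    by_contra h
    push_neg at h
    have : ∑ ω, ρ ω * ∏ i, f i false ω ⟨0, hd i⟩ ≤ 0 :=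
      Finset.sum_nonpos fun ω _ => h ω
    rw [h1] at this
    linarith
  have hρω : 0 < ρ ω ∧ 0 < ∏ i, f i false ω ⟨0, hd i⟩ := by
    rcases mul_pos_iff.mp hω with h | ⟨h1', h2'⟩
    · exact h
    · exact absurd (hρ0 ω) (not_le.mpr h1')
  have hfu : ∀ i : Fin n, 0 < f i false ω ⟨0, hd i⟩ := by
    intro i
    rcases (hf0 i false ω ⟨0, hd i⟩).lt_or_eq with h | h
    · exact h
    · exact absurd (Finset.prod_eq_zero (Finset.mem_univ i) h.symm) (ne_of_gt hρω.2)
  -- each f r true ω v = 0 for v ≠ last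
  have hv0 : ∀ (r : Fin n) (v : Fin (d r)),
      v ≠ ⟨d r - 1, Nat.sub_lt (hd r) Nat.one_pos⟩ → f r true ω v = 0 := by
    intro r v hv
    have hterm : ρ ω * (f r true ω v *
        f ⟨(r.1 + 1) % n, Nat.mod_lt _ hn⟩ false ω ⟨0, hd ⟨(r.1 + 1) % n, Nat.mod_lt _ hn⟩⟩) = 0 := by
      have := (Finset.sum_eq_zero_iff_of_nonneg (fun ω' _ =>
        mul_nonneg (hρ0 ω') (mul_nonneg (hf0 _ _ _ _) (hf0 _ _ _ _)))).mp (h2 r v hv)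
      exact this ω (Finset.mem_univ ω)
    have h2pos := hfu ⟨(r.1 + 1) % n, Nat.mod_lt _ hn⟩
    rcases mul_eq_zero.mp hterm with h | h
    · exact absurd h (ne_of_gt hρω.1)
    · rcases mul_eq_zero.mp h with h | h
      · exact h
      · exact absurd h (ne_of_gt h2pos)
  -- hence f r true ω last = 1
  have hlast : ∀ r : Fin n, f r true ω ⟨d r - 1, Nat.sub_lt (hd r) Nat.one_pos⟩ = 1 := by
    intro r
    have := hf1 r true ω
    rwa [Finset.sum_eq_single ⟨d r - 1, Nat.sub_lt (hd r) Nat.one_pos⟩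
      (fun v _ hv => hv0 r v hv) (fun h => absurd (Finset.mem_univ _) h)] at this
  -- contradiction with h3
  have hprod : ∏ i, f i true ω ⟨d i - 1, Nat.sub_lt (hd i) Nat.one_pos⟩ = 1 :=
    Finset.prod_eq_one fun i _ => hlast i
  have hterm3 : ρ ω * ∏ i, f i true ω ⟨d i - 1, Nat.sub_lt (hd i) Nat.one_pos⟩ = 0 :=
    (Finset.sum_eq_zero_iff_of_nonneg (fun ω' _ =>
      mul_nonneg (hρ0 ω') (Finset.prod_nonneg fun i _ => hf0 _ _ _ _))).mp h3 ω
      (Finset.mem_univ ω)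
  rw [hprod, mul_one] at hterm3
  exact absurd hterm3 (ne_of_gt hρω.1)
end

section
/- Any probability assignment (box) satisfying the modified Hardy conditions for n parties cannot be bi-separable with respect to any bipartition: if joint probabilities decompose as P(∀i: x̂_i = x_i) = Σ_k p_k Q_k(∀ j∈A: x̂_j = x_j) R_k(∀ l∈B: x̂_l = x_l) for a bipartition (A,B) of the parties into the first m and last n−m parties, where each Q_k, R_k is a no-signaling box on its subset of parties and p_k > 0 sum to 1, then the conditions P(∀i: u_i = 1) = q > 0, P(v_r ≠ d_r, u_{r+1} = 1) = 0 for all r (cyclic), and P(∀i: v_i = d_i) = 0 cannot all hold. -/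
open Finset

/-- A behavior (box) satisfying the modified Hardy conditions cannot be
bi-separable with respect to the bipartition into the first `m` and the last `n - m`
parties: if `P(s, x) = ∑ k, p k * Q k (s, x) * R k (s, x)` with `p k > 0` summing to `1`,
`Q k` depending only on the parties `i < m`, `R k` only on the parties `i ≥ m`, each of
them being a no-signaling box, then the conditions `P(∀ i : u_i = 1) = q > 0`,
`P(v_r ≠ d_r, u_{r+1} = 1) = 0` for all `r` (cyclically), and `P(∀ i : v_i = d_i) = 0`
cannot all hold.  Settings: `false` = `u_i`, `true` = `v_i`; outcome "1" is `⟨0, _⟩` and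
outcome "d_i" is `⟨d i - 1, _⟩`. -/
theorem statement4 (n m : ℕ) (hm : 0 < m) (hmn : m < n)
    (d : Fin n → ℕ) (hd : ∀ i, 1 ≤ d i)
    (K : Type) [Fintype K] (p : K → ℝ) (hp : ∀ k, 0 < p k) (hp1 : ∑ k, p k = 1)
    (Q R : K → (Fin n → Bool) → ((i : Fin n) → Fin (d i)) → ℝ)
    (hQ0 : ∀ k s x, 0 ≤ Q k s x) (hR0 : ∀ k s x, 0 ≤ R k s x)
    -- `Q k` is a box on the first `m` parties, `R k` on the remaining ones:
    (hQdep : ∀ k s s' x x', (∀ i : Fin n, i.1 < m → (s i = s' i ∧ x i = x' i)) →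
      Q k s x = Q k s' x')
    (hRdep : ∀ k s s' x x', (∀ i : Fin n, m ≤ i.1 → (s i = s' i ∧ x i = x' i)) →
      R k s x = R k s' x')
    -- no-signaling of each `Q k` and `R k`:
    (hQns : ∀ k (j : Fin n) (s s' : Fin n → Bool) (x : (i : Fin n) → Fin (d i)),
      (∀ i ≠ j, s i = s' i) →
      ∑ y : Fin (d j), Q k s (Function.update x j y) =
        ∑ y : Fin (d j), Q k s' (Function.update x j y))
    (hRns : ∀ k (j : Fin n) (s s' : Fin n → Bool) (x : (i : Fin n) → Fin (d i)),
      (∀ i ≠ j, s i = s' i) →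
      ∑ y : Fin (d j), R k s (Function.update x j y) =
        ∑ y : Fin (d j), R k s' (Function.update x j y))
    -- the bi-separable decomposition of the global behavior `P`:
    (P : (Fin n → Bool) → ((i : Fin n) → Fin (d i)) → ℝ)
    (hP : ∀ s x, P s x = ∑ k, p k * (Q k s x * R k s x))
    (hPnorm : ∀ s, ∑ x, P s x = 1)
    -- the modified Hardy conditions:
    (q : ℝ) (hq : 0 < q)
    (h1 : P (fun _ => false) (fun i => ⟨0, hd i⟩) = q)
    (h2 : ∀ r : Fin n, ∀ s : Fin n → Bool, s r = true →
      s ⟨(r.1 + 1) % n, Nat.mod_lt _ (Nat.zero_lt_of_lt r.2)⟩ = false →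
      ∑ x : (i : Fin n) → Fin (d i),
        (if x r ≠ ⟨d r - 1, Nat.sub_lt (hd r) Nat.one_pos⟩ ∧
            x ⟨(r.1 + 1) % n, Nat.mod_lt _ (Nat.zero_lt_of_lt r.2)⟩ =
              ⟨0, hd ⟨(r.1 + 1) % n, Nat.mod_lt _ (Nat.zero_lt_of_lt r.2)⟩⟩
          then P s x else 0) = 0)
    (h3 : P (fun _ => true) (fun i => ⟨d i - 1, Nat.sub_lt (hd i) Nat.one_pos⟩) = 0) :
    False := by
    classical
  -- nonnegativity of the terms of the decomposition
  have hterm : ∀ s x (k : K), (0:ℝ) ≤ p k * (Q k s x * R k s x) := fun s x k =>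
    mul_nonneg (hp k).le (mul_nonneg (hQ0 k s x) (hR0 k s x))
  have hPnn : ∀ s x, 0 ≤ P s x := fun s x => by
    rw [hP]; exact Finset.sum_nonneg fun k _ => hterm s x k
  have hPzero : ∀ s x, P s x = 0 → ∀ k, Q k s x * R k s x = 0 := by
    intro s x h k
    rw [hP] at h
    have h0 := (Finset.sum_eq_zero_iff_of_nonneg (fun k _ => hterm s x k)).1 h k (mem_univ k)
    rcases mul_eq_zero.1 h0 with h' | h'
    · exact absurd h' (hp k).ne'
    · exact h'
  -- the zero conditions hold term-by-term
  have key2 : ∀ (r : Fin n) (s : Fin n → Bool), s r = true →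
      s ⟨(r.1 + 1) % n, Nat.mod_lt _ (Nat.zero_lt_of_lt r.2)⟩ = false →
      ∀ x : (i : Fin n) → Fin (d i),
      (x r ≠ ⟨d r - 1, Nat.sub_lt (hd r) Nat.one_pos⟩ ∧
        x ⟨(r.1 + 1) % n, Nat.mod_lt _ (Nat.zero_lt_of_lt r.2)⟩ =
          ⟨0, hd ⟨(r.1 + 1) % n, Nat.mod_lt _ (Nat.zero_lt_of_lt r.2)⟩⟩) →
      ∀ k, Q k s x * R k s x = 0 := by
    intro r s hs hs' x hx k
    have h0 := h2 r s hs hs'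
    have h1x := (Finset.sum_eq_zero_iff_of_nonneg ?_).1 h0 x (mem_univ x)
    · rw [if_pos hx] at h1x
      exact hPzero s x h1x k
    · intro y _
      split
      · exact hPnn s y
      · exact le_refl 0
  -- choose a component with positive weight at (all u, all 1)
  have key1 : ∃ k, 0 < Q k (fun _ => false) (fun i => ⟨0, hd i⟩) *
      R k (fun _ => false) (fun i => ⟨0, hd i⟩) := by
    by_contra hcon
    push_neg at hcon
    have hle : P (fun _ => false) (fun i => ⟨0, hd i⟩) ≤ 0 := by
      rw [hP]
      refine Finset.sum_nonpos fun k _ => ?_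
      exact mul_nonpos_of_nonneg_of_nonpos (hp k).le (hcon k)
    rw [h1] at hle; linarith
  obtain ⟨k, hk⟩ := key1
  have hQRpos := mul_pos_iff.1 hk
  have hQpos : 0 < Q k (fun _ => false) (fun i => ⟨0, hd i⟩) := by
    rcases hQRpos with ⟨h', _⟩ | ⟨h', _⟩
    · exact h'
    · exact absurd h' (not_lt.2 (hQ0 k _ _))
  have hRpos : 0 < R k (fun _ => false) (fun i => ⟨0, hd i⟩) := by
    rcases hQRpos with ⟨_, h'⟩ | ⟨h', _⟩
    · exact h'
    · exact absurd h' (not_lt.2 (hQ0 k _ _))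
  -- ladder on the first m parties
  have lad1 : ∀ t, t ≤ m → 0 < Q k (fun i => decide (i.1 < t))
      (fun i => if i.1 < t then ⟨d i - 1, Nat.sub_lt (hd i) Nat.one_pos⟩ else ⟨0, hd i⟩) := by
    intro t
    induction t with
    | zero =>
      intro _
      have e1 : (fun i : Fin n => decide (i.1 < 0)) = (fun _ => false) := by
        funext i; simp
      have e2 : (fun i : Fin n => if i.1 < 0 then
          (⟨d i - 1, Nat.sub_lt (hd i) Nat.one_pos⟩ : Fin (d i)) else ⟨0, hd i⟩)
          = fun i => ⟨0, hd i⟩ := by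
        funext i; simp
      rw [e1, e2]; exact hQpos
    | succ t ih =>
      intro hle
      have ht : t < m := hle
      have htn : t < n := lt_trans ht hmn
      have htn1 : t + 1 < n := lt_of_le_of_lt hle hmn
      set j : Fin n := ⟨t, htn⟩ with hj
      have hmod : (t + 1) % n = t + 1 := Nat.mod_eq_of_lt htn1
      have hQt := ih ht.le
      have hagree : ∀ i ≠ j, (fun i : Fin n => decide (i.1 < t)) i =
          (fun i : Fin n => decide (i.1 < t + 1)) i := by
        intro i hij
        have hne : i.1 ≠ t := fun hh => hij (Fin.ext hh)
        simp only [decide_eq_decide]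
        omega
      have hns := hQns k j (fun i => decide (i.1 < t)) (fun i => decide (i.1 < t + 1))
        (fun i => if i.1 < t then ⟨d i - 1, Nat.sub_lt (hd i) Nat.one_pos⟩ else ⟨0, hd i⟩) hagree
      have hpos : 0 < ∑ y : Fin (d j), Q k (fun i => decide (i.1 < t))
          (Function.update (fun i => if i.1 < t then
            ⟨d i - 1, Nat.sub_lt (hd i) Nat.one_pos⟩ else ⟨0, hd i⟩) j y) := by
        refine Finset.sum_pos' (fun y _ => hQ0 k _ _) ⟨(if (j.1 : ℕ) < t then
          ⟨d j - 1, Nat.sub_lt (hd j) Nat.one_pos⟩ else ⟨0, hd j⟩), mem_univ _, ?_⟩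
        rw [show (Function.update (fun i => if i.1 < t then
            (⟨d i - 1, Nat.sub_lt (hd i) Nat.one_pos⟩ : Fin (d i)) else ⟨0, hd i⟩) j
            (if (j.1 : ℕ) < t then ⟨d j - 1, Nat.sub_lt (hd j) Nat.one_pos⟩ else ⟨0, hd j⟩))
            = (fun i => if i.1 < t then
            (⟨d i - 1, Nat.sub_lt (hd i) Nat.one_pos⟩ : Fin (d i)) else ⟨0, hd i⟩)
          from Function.update_eq_self j _]
        exact hQt
      rw [hns] at hpos
      obtain ⟨y, hy⟩ : ∃ y : Fin (d j), 0 < Q k (fun i => decide (i.1 < t + 1))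
          (Function.update (fun i => if i.1 < t then
            ⟨d i - 1, Nat.sub_lt (hd i) Nat.one_pos⟩ else ⟨0, hd i⟩) j y) := by
        by_contra hc
        push_neg at hc
        have hle' := Finset.sum_nonpos (fun y (_ : y ∈ Finset.univ) => hc y)
        linarith
      -- the surviving outcome is d - 1
      have hRy : R k (fun i : Fin n => decide (i.1 < t + 1))
          (Function.update (fun i => if i.1 < t then
            ⟨d i - 1, Nat.sub_lt (hd i) Nat.one_pos⟩ else ⟨0, hd i⟩) j y)
          = R k (fun _ => false) (fun i => ⟨0, hd i⟩) := by
        refine hRdep k _ _ _ _ fun i hi => ⟨?_, ?_⟩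
        · simp only [Fin.val_mk, decide_eq_false_iff_not]; omega
        · have hij : i ≠ j := by
            intro h'; rw [h'] at hi; simp only [hj, Fin.val_mk] at hi; omega
          rw [Function.update_of_ne hij]
          exact if_neg (by omega)
      have hyd : y = ⟨d j - 1, Nat.sub_lt (hd j) Nat.one_pos⟩ := by
        by_contra hy'
        have hzero := key2 j (fun i => decide (i.1 < t + 1))
          (by simp [hj]) (by simp only [hj, Fin.val_mk, decide_eq_false_iff_not]; omega)
          (Function.update (fun i => if i.1 < t then
            ⟨d i - 1, Nat.sub_lt (hd i) Nat.one_pos⟩ else ⟨0, hd i⟩) j y)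
          ⟨by rw [Function.update_self]; exact hy', by
            have hne : (⟨(j.1 + 1) % n, Nat.mod_lt _ (Nat.zero_lt_of_lt j.2)⟩ : Fin n) ≠ j := by
              simp only [Fin.ne_iff_vne, hj, Fin.val_mk]
              omega
            rw [Function.update_of_ne hne]
            exact if_neg (by simp only [hj, Fin.val_mk]; omega)⟩ k
        rw [hRy] at hzero
        rcases mul_eq_zero.1 hzero with h' | h'
        · rw [h'] at hy; exact lt_irrefl 0 hy
        · exact absurd h' hRpos.ne'
      have hXe : (Function.update (fun i => if i.1 < t then
            (⟨d i - 1, Nat.sub_lt (hd i) Nat.one_pos⟩ : Fin (d i)) else ⟨0, hd i⟩) j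
            (⟨d j - 1, Nat.sub_lt (hd j) Nat.one_pos⟩ : Fin (d j)))
          = fun i => if i.1 < t + 1 then
            (⟨d i - 1, Nat.sub_lt (hd i) Nat.one_pos⟩ : Fin (d i)) else ⟨0, hd i⟩ := by
        funext i
        rcases eq_or_ne i j with rfl | hij
        · rw [Function.update_self, if_pos (by simp only [hj, Fin.val_mk]; omega)]
        · have hne : i.1 ≠ t := fun hh => hij (Fin.ext hh)
          rw [Function.update_of_ne hij]
          by_cases hlt : i.1 < t
          · rw [if_pos hlt, if_pos (by omega)]
          · rw [if_neg hlt, if_neg (by omega)]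
      rw [hyd, hXe] at hy
      exact hy
  -- ladder on the last n - m parties
  have lad2 : ∀ t, m ≤ t → t ≤ n → 0 < R k (fun i => decide (m ≤ i.1 ∧ i.1 < t))
      (fun i => if m ≤ i.1 ∧ i.1 < t then
        ⟨d i - 1, Nat.sub_lt (hd i) Nat.one_pos⟩ else ⟨0, hd i⟩) := by
    intro t
    induction t with
    | zero => intro h _; exact absurd h (by omega)
    | succ t ih =>
      intro hmt htn
      rcases Nat.lt_or_ge t m with hlt | hge
      · -- base case : t + 1 = m
        have hEm : m = t + 1 := by omega
        have e1 : (fun i : Fin n => decide (m ≤ i.1 ∧ i.1 < t + 1)) = (fun _ => false) := by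
          funext i; simp only [Fin.val_mk, decide_eq_false_iff_not]; omega
        have e2 : (fun i : Fin n => if m ≤ i.1 ∧ i.1 < t + 1 then
            (⟨d i - 1, Nat.sub_lt (hd i) Nat.one_pos⟩ : Fin (d i)) else ⟨0, hd i⟩)
            = fun i => ⟨0, hd i⟩ := by
          funext i; exact if_neg (by omega)
        rw [e1, e2]; exact hRpos
      · -- inductive step
        have htn' : t < n := htn
        set j : Fin n := ⟨t, htn'⟩ with hj
        have hmod : (t + 1) % n = t + 1 ∨ (t + 1) % n = 0 := by
          rcases Nat.lt_or_ge (t + 1) n with h' | h'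
          · exact Or.inl (Nat.mod_eq_of_lt h')
          · right
            have he : t + 1 = n := by omega
            rw [he, Nat.mod_self]
        have hRt := ih hge htn'.le
        have hagree : ∀ i ≠ j, (fun i : Fin n => decide (m ≤ i.1 ∧ i.1 < t)) i =
            (fun i : Fin n => decide (m ≤ i.1 ∧ i.1 < t + 1)) i := by
          intro i hij
          have hne : i.1 ≠ t := fun hh => hij (Fin.ext hh)
          simp only [decide_eq_decide]
          omega
        have hns := hRns k j (fun i => decide (m ≤ i.1 ∧ i.1 < t))
          (fun i => decide (m ≤ i.1 ∧ i.1 < t + 1))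
          (fun i => if m ≤ i.1 ∧ i.1 < t then
            ⟨d i - 1, Nat.sub_lt (hd i) Nat.one_pos⟩ else ⟨0, hd i⟩) hagree
        have hpos : 0 < ∑ y : Fin (d j), R k (fun i => decide (m ≤ i.1 ∧ i.1 < t))
            (Function.update (fun i => if m ≤ i.1 ∧ i.1 < t then
              ⟨d i - 1, Nat.sub_lt (hd i) Nat.one_pos⟩ else ⟨0, hd i⟩) j y) := by
          refine Finset.sum_pos' (fun y _ => hR0 k _ _) ⟨(if m ≤ (j.1 : ℕ) ∧ (j.1 : ℕ) < t then
            ⟨d j - 1, Nat.sub_lt (hd j) Nat.one_pos⟩ else ⟨0, hd j⟩), mem_univ _, ?_⟩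
          rw [show (Function.update (fun i => if m ≤ i.1 ∧ i.1 < t then
              (⟨d i - 1, Nat.sub_lt (hd i) Nat.one_pos⟩ : Fin (d i)) else ⟨0, hd i⟩) j
              (if m ≤ (j.1 : ℕ) ∧ (j.1 : ℕ) < t then
                ⟨d j - 1, Nat.sub_lt (hd j) Nat.one_pos⟩ else ⟨0, hd j⟩))
              = (fun i => if m ≤ i.1 ∧ i.1 < t then
              (⟨d i - 1, Nat.sub_lt (hd i) Nat.one_pos⟩ : Fin (d i)) else ⟨0, hd i⟩)
            from Function.update_eq_self j _]
          exact hRt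
        rw [hns] at hpos
        obtain ⟨y, hy⟩ : ∃ y : Fin (d j), 0 < R k (fun i => decide (m ≤ i.1 ∧ i.1 < t + 1))
            (Function.update (fun i => if m ≤ i.1 ∧ i.1 < t then
              ⟨d i - 1, Nat.sub_lt (hd i) Nat.one_pos⟩ else ⟨0, hd i⟩) j y) := by
          by_contra hc
          push_neg at hc
          have hle' := Finset.sum_nonpos (fun y (_ : y ∈ Finset.univ) => hc y)
          linarith
        have hQy : Q k (fun i : Fin n => decide (m ≤ i.1 ∧ i.1 < t + 1))
            (Function.update (fun i => if m ≤ i.1 ∧ i.1 < t then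
              ⟨d i - 1, Nat.sub_lt (hd i) Nat.one_pos⟩ else ⟨0, hd i⟩) j y)
            = Q k (fun _ => false) (fun i => ⟨0, hd i⟩) := by
          refine hQdep k _ _ _ _ fun i hi => ⟨?_, ?_⟩
          · simp only [Fin.val_mk, decide_eq_false_iff_not]; omega
          · have hij : i ≠ j := by
              intro h'; rw [h'] at hi; simp only [hj, Fin.val_mk] at hi; omega
            rw [Function.update_of_ne hij]
            exact if_neg (by omega)
        have hyd : y = ⟨d j - 1, Nat.sub_lt (hd j) Nat.one_pos⟩ := by
          by_contra hy'
          have hzero := key2 j (fun i => decide (m ≤ i.1 ∧ i.1 < t + 1))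
            (by simp only [hj, Fin.val_mk, decide_eq_true_eq]; omega)
            (by simp only [hj, Fin.val_mk, decide_eq_false_iff_not]; omega)
            (Function.update (fun i => if m ≤ i.1 ∧ i.1 < t then
              ⟨d i - 1, Nat.sub_lt (hd i) Nat.one_pos⟩ else ⟨0, hd i⟩) j y)
            ⟨by rw [Function.update_self]; exact hy', by
              have hne : (⟨(j.1 + 1) % n, Nat.mod_lt _ (Nat.zero_lt_of_lt j.2)⟩ : Fin n) ≠ j := by
                simp only [Fin.ne_iff_vne, hj, Fin.val_mk]
                omega
              rw [Function.update_of_ne hne]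
              exact if_neg (by simp only [hj, Fin.val_mk]; omega)⟩ k
          rw [hQy] at hzero
          rcases mul_eq_zero.1 hzero with h' | h'
          · exact absurd h' hQpos.ne'
          · rw [h'] at hy; exact lt_irrefl 0 hy
        have hXe : (Function.update (fun i => if m ≤ i.1 ∧ i.1 < t then
              (⟨d i - 1, Nat.sub_lt (hd i) Nat.one_pos⟩ : Fin (d i)) else ⟨0, hd i⟩) j
              (⟨d j - 1, Nat.sub_lt (hd j) Nat.one_pos⟩ : Fin (d j)))
            = fun i => if m ≤ i.1 ∧ i.1 < t + 1 then
              (⟨d i - 1, Nat.sub_lt (hd i) Nat.one_pos⟩ : Fin (d i)) else ⟨0, hd i⟩ := by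
          funext i
          rcases eq_or_ne i j with rfl | hij
          · rw [Function.update_self, if_pos (by simp only [hj, Fin.val_mk]; omega)]
          · have hne : i.1 ≠ t := fun hh => hij (Fin.ext hh)
            rw [Function.update_of_ne hij]
            by_cases hlt' : m ≤ i.1 ∧ i.1 < t
            · rw [if_pos hlt', if_pos (by omega)]
            · rw [if_neg hlt', if_neg (by omega)]
        rw [hyd, hXe] at hy
        exact hy
  -- assemble the contradiction with h3
  have hQm := lad1 m le_rfl
  have hRn := lad2 n hmn.le le_rfl
  have h30 := hPzero _ _ h3 k
  have eQ : Q k (fun _ => true) (fun i => ⟨d i - 1, Nat.sub_lt (hd i) Nat.one_pos⟩)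
      = Q k (fun i => decide (i.1 < m))
        (fun i => if i.1 < m then ⟨d i - 1, Nat.sub_lt (hd i) Nat.one_pos⟩ else ⟨0, hd i⟩) := by
    refine hQdep k _ _ _ _ fun i hi => ⟨?_, ?_⟩
    · simp [hi]
    · exact (if_pos hi).symm
  have eR : R k (fun _ => true) (fun i => ⟨d i - 1, Nat.sub_lt (hd i) Nat.one_pos⟩)
      = R k (fun i => decide (m ≤ i.1 ∧ i.1 < n))
        (fun i => if m ≤ i.1 ∧ i.1 < n then
          ⟨d i - 1, Nat.sub_lt (hd i) Nat.one_pos⟩ else ⟨0, hd i⟩) := by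
    refine hRdep k _ _ _ _ fun i hi => ⟨?_, ?_⟩
    · have : m ≤ i.1 ∧ i.1 < n := ⟨hi, i.2⟩
      simp [this]
    · exact (if_pos ⟨hi, i.2⟩).symm
  rw [eQ, eR] at h30
  rcases mul_eq_zero.1 h30 with h' | h'
  · exact absurd h' hQm.ne'
  · exact absurd h' hRn.ne'
end

section
/- In the 3-qubit Hardy construction, the seven product states |φ_0⟩ = |v_1=2⟩|v_2=2⟩|v_3=2⟩, |φ_1⟩ = |v_1=1⟩|u_2=1⟩|u_3=1⟩, |φ_2⟩ = |v_1=1⟩|u_2=1⟩|u_3=2⟩, |φ_3⟩ = |u_1=1⟩|v_2=1⟩|u_3=1⟩, |φ_4⟩ = |u_1=2⟩|v_2=1⟩|u_3=1⟩, |φ_5⟩ = |u_1=1⟩|u_2=1⟩|v_3=1⟩, |φ_6⟩ = |u_1=1⟩|u_2=2⟩|v_3=1⟩, together with |φ_7⟩ = |u_1=1⟩|u_2=1⟩|u_3=1⟩, are linearly independent in (ℂ²)^⊗3. -/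
open scoped InnerProductSpace


/-- The product state `|a⟩|b⟩|c⟩` of three qubits, as an element of `(ℂ²)^⊗3`
modeled by `EuclideanSpace ℂ (Fin 2 × Fin 2 × Fin 2)`. -/
noncomputable def prod3 (a b c : EuclideanSpace ℂ (Fin 2)) :
    EuclideanSpace ℂ (Fin 2 × Fin 2 × Fin 2) :=
  (WithLp.equiv 2 _).symm (fun p => a p.1 * b p.2.1 * c p.2.2)

lemma inner_prod3 (a b c a' b' c' : EuclideanSpace ℂ (Fin 2)) :
    (inner ℂ (prod3 a b c) (prod3 a' b' c'))
      = inner ℂ a a' * inner ℂ b b' * inner ℂ c c' := by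
  simp [prod3, PiLp.inner_apply, Fintype.sum_prod_type, Fin.sum_univ_two, RCLike.inner_apply,
    map_mul]
  ring

lemma cancel0 {x y : ℂ} (hx : x ≠ 0) (h : x * y = 0) : y = 0 :=
  (mul_eq_zero.mp h).resolve_left hx

/-- In the 3-qubit Hardy construction (with `|v_j=1⟩ = v j 0`,
`|v_j=2⟩ = v j 1` an orthonormal basis of `ℂ²` and
`|u_j=1⟩ = α_j|v_j=1⟩ + β_j|v_j=2⟩`, `|u_j=2⟩ = β_j*|v_j=1⟩ − α_j*|v_j=2⟩`,
`0 < |α_j|, |β_j| < 1`), the eight product states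
`|φ_0⟩, …, |φ_7⟩` are linearly independent in `(ℂ²)^⊗3`. -/
theorem statement6 (v u : Fin 3 → Fin 2 → EuclideanSpace ℂ (Fin 2))
    (hv : ∀ j, Orthonormal ℂ (v j))
    (α β : Fin 3 → ℂ)
    (hnorm : ∀ j, ‖α j‖ ^ 2 + ‖β j‖ ^ 2 = 1)
    (hα : ∀ j, 0 < ‖α j‖ ∧ ‖α j‖ < 1)
    (hβ : ∀ j, 0 < ‖β j‖ ∧ ‖β j‖ < 1)
    (hu0 : ∀ j, u j 0 = α j • v j 0 + β j • v j 1)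
    (hu1 : ∀ j, u j 1 = (starRingEnd ℂ) (β j) • v j 0 - (starRingEnd ℂ) (α j) • v j 1) :
    LinearIndependent ℂ
      ![prod3 (v 0 1) (v 1 1) (v 2 1),
        prod3 (v 0 0) (u 1 0) (u 2 0),
        prod3 (v 0 0) (u 1 0) (u 2 1),
        prod3 (u 0 0) (v 1 0) (u 2 0),
        prod3 (u 0 1) (v 1 0) (u 2 0),
        prod3 (u 0 0) (u 1 0) (v 2 0),
        prod3 (u 0 0) (u 1 1) (v 2 0),
        prod3 (u 0 0) (u 1 0) (u 2 0)] := by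
  rw [Fintype.linearIndependent_iff]
  intro g hg
  have hvv : ∀ j, ∀ i i' : Fin 2, (inner ℂ (v j i) (v j i')) = if i = i' then 1 else 0 :=
    fun j => orthonormal_iff_ite.mp (hv j)
  have hαne : ∀ j, α j ≠ 0 := fun j => norm_pos_iff.mp (hα j).1
  have hβne : ∀ j, β j ≠ 0 := fun j => norm_pos_iff.mp (hβ j).1
  have hAne : ∀ j, (starRingEnd ℂ) (α j) ≠ 0 := fun j => (map_ne_zero _).mpr (hαne j)
  have hBne : ∀ j, (starRingEnd ℂ) (β j) ≠ 0 := fun j => (map_ne_zero _).mpr (hβne j)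
  have hC : ∀ j, (starRingEnd ℂ) (α j) * α j + (starRingEnd ℂ) (β j) * β j = 1 := by
    intro j
    rw [← Complex.normSq_eq_conj_mul_self, ← Complex.normSq_eq_conj_mul_self]
    rw [Complex.normSq_eq_norm_sq, Complex.normSq_eq_norm_sq]
    exact_mod_cast congrArg (fun r : ℝ => (r : ℂ)) (hnorm j)
  have hg' : g 0 • prod3 (v 0 1) (v 1 1) (v 2 1)
      + g 1 • prod3 (v 0 0) (u 1 0) (u 2 0)
      + g 2 • prod3 (v 0 0) (u 1 0) (u 2 1)
      + g 3 • prod3 (u 0 0) (v 1 0) (u 2 0)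
      + g 4 • prod3 (u 0 1) (v 1 0) (u 2 0)
      + g 5 • prod3 (u 0 0) (u 1 0) (v 2 0)
      + g 6 • prod3 (u 0 0) (u 1 1) (v 2 0)
      + g 7 • prod3 (u 0 0) (u 1 0) (u 2 0) = 0 := by
    rw [← hg, Fin.sum_univ_eight]; rfl
  have mk : ∀ i j k : Fin 2, ∀ x : EuclideanSpace ℂ (Fin 2 × Fin 2 × Fin 2), x = 0 →
      (inner ℂ (prod3 (v 0 i) (v 1 j) (v 2 k)) x) = 0 := by
    intro i j k x hx; rw [hx, inner_zero_right]
  have E111 := mk 1 1 1 _ hg'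
  have E011 := mk 0 1 1 _ hg'
  have E101 := mk 1 0 1 _ hg'
  have E110 := mk 1 1 0 _ hg'
  have E001 := mk 0 0 1 _ hg'
  have E010 := mk 0 1 0 _ hg'
  have E100 := mk 1 0 0 _ hg'
  have E000 := mk 0 0 0 _ hg'
  simp only [inner_add_right, inner_smul_right, inner_prod3, hu0, hu1, inner_sub_right,
    hvv] at E111 E011 E101 E110 E001 E010 E100 E000
  norm_num at E111 E011 E101 E110 E001 E010 E100 E000
  -- abbreviations done; now elimination
  have s1 : α 2 * g 1 + (starRingEnd ℂ) (β 2) * g 2 = 0 := by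
    have t : β 0 * (β 1 * (α 2 * g 1 + (starRingEnd ℂ) (β 2) * g 2)) = 0 := by
      linear_combination β 0 * E010 - α 0 * E110
    exact cancel0 (hβne 1) (cancel0 (hβne 0) t)
  have s2 : α 0 * g 3 + (starRingEnd ℂ) (β 0) * g 4 = 0 := by
    have t : β 1 * (β 2 * (α 0 * g 3 + (starRingEnd ℂ) (β 0) * g 4)) = 0 := by
      linear_combination β 1 * E001 - α 1 * E011
    exact cancel0 (hβne 2) (cancel0 (hβne 1) t)
  have s3 : α 1 * g 5 + (starRingEnd ℂ) (β 1) * g 6 = 0 := by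
    have t : β 0 * (β 2 * (α 1 * g 5 + (starRingEnd ℂ) (β 1) * g 6)) = 0 := by
      linear_combination β 2 * E100 - α 2 * E101
    exact cancel0 (hβne 2) (cancel0 (hβne 0) t)
  have q1 : β 2 * g 1 - (starRingEnd ℂ) (α 2) * g 2 + α 0 * β 2 * g 7 = 0 := by
    have t : β 1 * (β 2 * g 1 - (starRingEnd ℂ) (α 2) * g 2 + α 0 * β 2 * g 7) = 0 := by
      linear_combination E011
    exact cancel0 (hβne 1) t
  have q2 : β 0 * g 3 - (starRingEnd ℂ) (α 0) * g 4 + β 0 * α 1 * g 7 = 0 := by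
    have t : β 2 * (β 0 * g 3 - (starRingEnd ℂ) (α 0) * g 4 + β 0 * α 1 * g 7) = 0 := by
      linear_combination E101
    exact cancel0 (hβne 2) t
  have q3 : β 1 * g 5 - (starRingEnd ℂ) (α 1) * g 6 + β 1 * α 2 * g 7 = 0 := by
    have t : β 0 * (β 1 * g 5 - (starRingEnd ℂ) (α 1) * g 6 + β 1 * α 2 * g 7) = 0 := by
      linear_combination E110
    exact cancel0 (hβne 0) t
  have hg2 : g 2 = α 0 * α 2 * β 2 * g 7 := by
    linear_combination β 2 * s1 - α 2 * q1 - g 2 * hC 2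
  have hg1 : g 1 = -(α 0 * (starRingEnd ℂ) (β 2) * β 2 * g 7) := by
    have t : α 2 * (g 1 + α 0 * (starRingEnd ℂ) (β 2) * β 2 * g 7) = 0 := by
      linear_combination s1 - (starRingEnd ℂ) (β 2) * hg2
    have := cancel0 (hαne 2) t
    linear_combination this
  have hg4 : g 4 = α 0 * β 0 * α 1 * g 7 := by
    linear_combination β 0 * s2 - α 0 * q2 - g 4 * hC 0
  have hg3 : g 3 = -((starRingEnd ℂ) (β 0) * β 0 * α 1 * g 7) := by
    have t : α 0 * (g 3 + (starRingEnd ℂ) (β 0) * β 0 * α 1 * g 7) = 0 := by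
      linear_combination s2 - (starRingEnd ℂ) (β 0) * hg4
    have := cancel0 (hαne 0) t
    linear_combination this
  have hg6 : g 6 = α 1 * β 1 * α 2 * g 7 := by
    linear_combination β 1 * s3 - α 1 * q3 - g 6 * hC 1
  have hg5 : g 5 = -((starRingEnd ℂ) (β 1) * β 1 * α 2 * g 7) := by
    have t : α 1 * (g 5 + (starRingEnd ℂ) (β 1) * β 1 * α 2 * g 7) = 0 := by
      linear_combination s3 - (starRingEnd ℂ) (β 1) * hg6
    have := cancel0 (hαne 1) t
    linear_combination this
  have hg7 : g 7 = 0 := by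
    have t : α 0 * (α 1 * (α 2 * g 7)) = 0 := by
      linear_combination E000 - α 1 * α 2 * hg1 - α 1 * (starRingEnd ℂ) (β 2) * hg2
        - α 0 * α 2 * hg3 - (starRingEnd ℂ) (β 0) * α 2 * hg4 - α 0 * α 1 * hg5
        - α 0 * (starRingEnd ℂ) (β 1) * hg6
    exact cancel0 (hαne 2) (cancel0 (hαne 1) (cancel0 (hαne 0) t))
  have hg0 : g 0 = 0 := by linear_combination E111 - β 0 * β 1 * β 2 * hg7
  intro i
  fin_cases i
  · exact hg0
  · show g 1 = 0; rw [hg1, hg7]; ring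
  · show g 2 = 0; rw [hg2, hg7]; ring
  · show g 3 = 0; rw [hg3, hg7]; ring
  · show g 4 = 0; rw [hg4, hg7]; ring
  · show g 5 = 0; rw [hg5, hg7]; ring
  · show g 6 = 0; rw [hg6, hg7]; ring
  · exact hg7
end

section
/- Under the no-signaling and normalization constraints, the maximum of the success probability P(u_1=1, u_2=1, u_3=1) subject to the modified Hardy zero conditions for three two-outcome parties (P(v_r ≠ 2, u_{r+1}=1) = 0 for r = 1,2,3 cyclically and P(v_1=2, v_2=2, v_3=2) = 0) equals 1/3. -/
open Finset

/-- Support of the optimal no-signaling box (each listed point has weight 1/3). -/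
def hardySupp : List (Bool × Bool × Bool × Fin 2 × Fin 2 × Fin 2) :=
  [ (false,false,false,0,0,0), (false,false,false,1,0,1), (false,false,false,1,1,0),
    (false,false,true ,0,0,1), (false,false,true ,1,0,0), (false,false,true ,1,1,1),
    (false,true ,false,0,1,0), (false,true ,false,1,0,1), (false,true ,false,1,1,0),
    (false,true ,true ,0,1,1), (false,true ,true ,1,0,1), (false,true ,true ,1,1,0),
    (true ,false,false,0,1,0), (true ,false,false,1,0,0), (true ,false,false,1,0,1),
    (true ,false,true ,0,1,1), (true ,false,true ,1,0,0), (true ,false,true ,1,0,1),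
    (true ,true ,false,0,1,0), (true ,true ,false,1,0,1), (true ,true ,false,1,1,0),
    (true ,true ,true ,0,1,1), (true ,true ,true ,1,0,1), (true ,true ,true ,1,1,0) ]

def hardyF (s : Fin 3 → Bool) (x : Fin 3 → Fin 2) : ℕ :=
  if (s 0, s 1, s 2, x 0, x 1, x 2) ∈ hardySupp then 1 else 0

lemma hardyF_norm : ∀ s, ∑ x : Fin 3 → Fin 2, hardyF s x = 3 := by decide

lemma hardyF_ns : ∀ (j : Fin 3) (s s' : Fin 3 → Bool) (x : Fin 3 → Fin 2),
    (∀ i ≠ j, s i = s' i) →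
    ∑ y : Fin 2, hardyF s (Function.update x j y) =
      ∑ y : Fin 2, hardyF s' (Function.update x j y) := by decide

lemma hardyF_zero : ∀ r : Fin 3, ∀ s : Fin 3 → Bool, s r = true → s (r + 1) = false →
    ∑ x : Fin 3 → Fin 2, (if x r ≠ 1 ∧ x (r + 1) = 0 then hardyF s x else 0) = 0 := by decide

lemma hardyF_v : hardyF (fun _ => true) (fun _ => 1) = 0 := by decide

lemma hardyF_u : hardyF (fun _ => false) (fun _ => 0) = 1 := by decide

lemma sum_pi8 (g : (Fin 3 → Fin 2) → ℝ) :
    ∑ x, g x = g ![0,0,0] + g ![0,0,1] + g ![0,1,0] + g ![0,1,1]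
      + g ![1,0,0] + g ![1,0,1] + g ![1,1,0] + g ![1,1,1] := by
  rw [show (univ : Finset (Fin 3 → Fin 2)) =
      {![0,0,0], ![0,0,1], ![0,1,0], ![0,1,1], ![1,0,0], ![1,0,1], ![1,1,0], ![1,1,1]}
      from by decide]
  rw [Finset.sum_insert (by decide), Finset.sum_insert (by decide),
    Finset.sum_insert (by decide), Finset.sum_insert (by decide),
    Finset.sum_insert (by decide), Finset.sum_insert (by decide),
    Finset.sum_insert (by decide), Finset.sum_singleton]
  ring

lemma upd0 (a b c y : Fin 2) : Function.update ![a,b,c] (0 : Fin 3) y = ![y,b,c] := by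
  funext i; fin_cases i <;> simp [Function.update]

lemma upd1 (a b c y : Fin 2) : Function.update ![a,b,c] (1 : Fin 3) y = ![a,y,c] := by
  funext i; fin_cases i <;> simp [Function.update]

lemma upd2 (a b c y : Fin 2) : Function.update ![a,b,c] (2 : Fin 3) y = ![a,b,y] := by
  funext i; fin_cases i <;> simp [Function.update]

lemma ite_sum_zero {P : (Fin 3 → Fin 2) → ℝ} {c : (Fin 3 → Fin 2) → Prop} [DecidablePred c]
    (hpos : ∀ x, 0 ≤ P x) (h : ∑ x, (if c x then P x else 0) = 0)
    (x0 : Fin 3 → Fin 2) (hc : c x0) : P x0 = 0 := by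
  have h0 := (Finset.sum_eq_zero_iff_of_nonneg
    (fun x _ => by by_cases hx : c x <;> simp [hx, hpos x])).mp h x0 (mem_univ _)
  rwa [if_pos hc] at h0

/-- For three parties with two settings (`false` = `u_i`,
`true` = `v_i`) and two outcomes (`0` = outcome "1", `1` = outcome "2") each,
the maximum of the success probability `P(u_1=1, u_2=1, u_3=1)` over all
no-signaling behaviors satisfying the modified Hardy zero conditions
(`P(v_r ≠ 2, u_{r+1} = 1) = 0` for `r = 1, 2, 3` cyclically and
`P(v_1=2, v_2=2, v_3=2) = 0`) equals `1/3`. -/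
theorem statement18 :
    IsGreatest
      {q : ℝ | ∃ P : (Fin 3 → Bool) → (Fin 3 → Fin 2) → ℝ,
        (∀ s x, 0 ≤ P s x) ∧
        (∀ s, ∑ x, P s x = 1) ∧
        -- no-signaling
        (∀ (j : Fin 3) (s s' : Fin 3 → Bool) (x : Fin 3 → Fin 2),
          (∀ i ≠ j, s i = s' i) →
          ∑ y : Fin 2, P s (Function.update x j y) =
            ∑ y : Fin 2, P s' (Function.update x j y)) ∧
        -- P(v_r ≠ 2, u_{r+1} = 1) = 0 for all r (cyclically)
        (∀ r : Fin 3, ∀ s : Fin 3 → Bool, s r = true → s (r + 1) = false →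
          ∑ x : Fin 3 → Fin 2,
            (if x r ≠ 1 ∧ x (r + 1) = 0 then P s x else 0) = 0) ∧
        -- P(v_1 = 2, v_2 = 2, v_3 = 2) = 0
        P (fun _ => true) (fun _ => 1) = 0 ∧
        q = P (fun _ => false) (fun _ => 0)}
      (1 / 3) := by
  constructor
  · -- membership: the explicit box `hardyF / 3`
    refine ⟨fun s x => (hardyF s x : ℝ) / 3, ?_, ?_, ?_, ?_, ?_, ?_⟩
    · intro s x; positivity
    · intro s
      rw [← Finset.sum_div, ← Nat.cast_sum, hardyF_norm s]
      norm_num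
    · intro j s s' x h
      rw [← Finset.sum_div, ← Finset.sum_div, ← Nat.cast_sum, ← Nat.cast_sum,
        hardyF_ns j s s' x h]
    · intro r s h1 h2
      have e : ∀ x : Fin 3 → Fin 2,
          (if x r ≠ 1 ∧ x (r + 1) = 0 then (hardyF s x : ℝ) / 3 else 0)
            = ((if x r ≠ 1 ∧ x (r + 1) = 0 then hardyF s x else 0 : ℕ) : ℝ) / 3 := by
        intro x; split <;> simp
      simp only [e]
      rw [← Finset.sum_div, ← Nat.cast_sum, hardyF_zero r s h1 h2]
      norm_num
    · show (hardyF _ _ : ℝ) / 3 = 0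
      rw [hardyF_v]; norm_num
    · show (1 : ℝ) / 3 = (hardyF _ _ : ℝ) / 3
      rw [hardyF_u]; norm_num
  · -- upper bound
    rintro q ⟨P, hpos, hnorm, hns, hz, hv, hq⟩
    have hsf : (fun _ => false : Fin 3 → Bool) = ![false, false, false] := by
      funext i; fin_cases i <;> rfl
    have hst : (fun _ => true : Fin 3 → Bool) = ![true, true, true] := by
      funext i; fin_cases i <;> rfl
    have hx0 : (fun _ => 0 : Fin 3 → Fin 2) = ![0, 0, 0] := by
      funext i; fin_cases i <;> rfl
    have hx1 : (fun _ => 1 : Fin 3 → Fin 2) = ![1, 1, 1] := by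
      funext i; fin_cases i <;> rfl
    rw [hsf, hx0] at hq
    rw [hst, hx1] at hv
    -- no-signaling instances
    have e1 := hns 2 ![false,false,false] ![false,false,true] ![0,0,0] (by decide)
    have e2 := hns 0 ![false,false,true] ![true,false,true] ![0,0,1] (by decide)
    have e3 := hns 1 ![true,false,true] ![true,true,true] ![1,0,1] (by decide)
    have e4 := hns 0 ![false,false,false] ![true,false,false] ![0,0,0] (by decide)
    have e5 := hns 1 ![true,false,false] ![true,true,false] ![1,0,0] (by decide)
    have e6 := hns 2 ![true,true,false] ![true,true,true] ![1,1,0] (by decide)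
    have e7 := hns 1 ![false,false,false] ![false,true,false] ![0,0,0] (by decide)
    have e8 := hns 2 ![false,true,false] ![false,true,true] ![0,1,0] (by decide)
    have e9 := hns 0 ![false,true,true] ![true,true,true] ![0,1,1] (by decide)
    simp only [Fin.sum_univ_two, upd0, upd1, upd2] at e1 e2 e3 e4 e5 e6 e7 e8 e9
    -- zero-condition consequences
    have z1 := ite_sum_zero (fun x => hpos _ x)
      (hz 2 ![false,false,true] (by decide) (by decide)) ![0,0,0] (by decide)
    have z2 := ite_sum_zero (fun x => hpos _ x)
      (hz 0 ![true,false,true] (by decide) (by decide)) ![0,0,1] (by decide)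
    have z3 := ite_sum_zero (fun x => hpos _ x)
      (hz 0 ![true,false,false] (by decide) (by decide)) ![0,0,0] (by decide)
    have z4 := ite_sum_zero (fun x => hpos _ x)
      (hz 1 ![true,true,false] (by decide) (by decide)) ![1,0,0] (by decide)
    have z5 := ite_sum_zero (fun x => hpos _ x)
      (hz 1 ![false,true,false] (by decide) (by decide)) ![0,0,0] (by decide)
    have z6 := ite_sum_zero (fun x => hpos _ x)
      (hz 2 ![false,true,true] (by decide) (by decide)) ![0,1,0] (by decide)
    -- normalization at (v,v,v)
    have hn := hnorm ![true,true,true]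
    rw [sum_pi8] at hn
    -- final linear arithmetic
    rw [hq]
    linarith [hpos ![false,false,false] ![0,0,1], hpos ![false,false,false] ![1,0,0],
      hpos ![false,false,false] ![0,1,0], hpos ![false,false,true] ![1,0,1],
      hpos ![true,false,true] ![1,1,1], hpos ![true,false,false] ![1,1,0],
      hpos ![true,true,false] ![1,1,1], hpos ![false,true,false] ![0,1,1],
      hpos ![false,true,true] ![1,1,1],
      hpos ![true,true,true] ![0,0,0], hpos ![true,true,true] ![0,0,1],
      hpos ![true,true,true] ![0,1,0], hpos ![true,true,true] ![1,0,0],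
      e1, e2, e3, e4, e5, e6, e7, e8, e9, z1, z2, z3, z4, z5, z6, hn, hv]
end
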